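/- In the OPT setup, every column adjacent to J is matched by the partial matching M_p: for every row j ∈ J and every column k with (j,k) ∈ S, there exists a row i ∈ I ∩ X_{W*} with (i,k) ∈ M (so (i,k) ∈ M_p). -/
import Mathlib


open Matrix MeasureTheory

/-- `A` has sparsity pattern `S`: the nonzero entries of `A` are exactly those indexed by `S`. -/
def HasPattern {m n : ℕ} (S : Finset (Fin m × Fin n)) (A : Matrix (Fin m) (Fin n) ℝ) : Prop :=
  ∀ i j, A i j ≠ 0 ↔ (i, j) ∈ S

/-- Generic rank of the class of matrices with sparsity pattern `S`. -/
noncomputable def sprank {m n : ℕ} (S : Finset (Fin m × Fin n)) : ℕ :=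
  sSup {r : ℕ | ∃ A : Matrix (Fin m) (Fin n) ℝ, HasPattern S A ∧ A.rank = r}

/-- The sparsity pattern restricted to the rows in `T` (rows outside `T` become zero). -/
def patternOn {m n : ℕ} (S : Finset (Fin m × Fin n)) (T : Finset (Fin m)) :
    Finset (Fin m × Fin n) :=
  S.filter (fun p => p.1 ∈ T)

/-- A matching of a sparsity pattern: any two distinct pairs differ in both coordinates. -/
def IsMatching {m n : ℕ} (M : Finset (Fin m × Fin n)) : Prop :=
  ∀ p ∈ M, ∀ q ∈ M, p ≠ q → p.1 ≠ q.1 ∧ p.2 ≠ q.2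

/-- `nu S` : maximum cardinality of a matching contained in `S`. -/
noncomputable def nu {m n : ℕ} (S : Finset (Fin m × Fin n)) : ℕ :=
  sSup {k : ℕ | ∃ M ⊆ S, IsMatching M ∧ M.card = k}

/-- ℓ₀ "norm": number of nonzero entries of a vector. -/
noncomputable def l0 {m : ℕ} (y : Fin m → ℝ) : ℕ :=
  (Finset.univ.filter (fun i => y i ≠ 0)).card

/-- `cospark A` : minimum of `‖A x‖₀` over nonzero `x`. -/
noncomputable def cospark {m n : ℕ} (A : Matrix (Fin m) (Fin n) ℝ) : ℕ :=
  sInf {k : ℕ | ∃ x : Fin n → ℝ, x ≠ 0 ∧ l0 (A.mulVec x) = k}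

/-- Generic cospark of the class of matrices with sparsity pattern `S`. -/
noncomputable def spcospark {m n : ℕ} (S : Finset (Fin m × Fin n)) : ℕ :=
  sSup {k : ℕ | ∃ A : Matrix (Fin m) (Fin n) ℝ, HasPattern S A ∧ cospark A = k}

/-- The row-submatrix `A_T`, realized as `A` with the rows outside `T` zeroed out. -/
noncomputable def rowRestrict {m n : ℕ} (A : Matrix (Fin m) (Fin n) ℝ) (T : Finset (Fin m)) :
    Matrix (Fin m) (Fin n) ℝ :=
  Matrix.of fun i j => if i ∈ T then A i j else 0

/-- `X_W` : the rows of the pattern `S` all of whose nonzero positions lie in the columns `W`. -/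
def rowsIn {m n : ℕ} (S : Finset (Fin m × Fin n)) (W : Finset (Fin n)) : Finset (Fin m) :=
  Finset.univ.filter (fun i => ∀ j, (i, j) ∈ S → j ∈ W)


lemma nu_ge_aux {m n : ℕ} (S : Finset (Fin m × Fin n)) (M : Finset (Fin m × Fin n))
    (hsub : M ⊆ S) (hM : IsMatching M) : M.card ≤ nu S := by
  apply le_csSup
  · exact ⟨S.card, by rintro x ⟨N, hN, _, rfl⟩; exact Finset.card_le_card hN⟩
  · exact ⟨M, hsub, hM, rfl⟩

/-- in the OPT setup, every column adjacent to `J` is matched by the partial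
matching `M_p = {(i,k) ∈ M : i ∈ X_{W*}}`: for every `j ∈ J` and every column `k` with
`(j,k) ∈ S`, there is a row `i ∈ I ∩ X_{W*}` with `(i,k) ∈ M`. -/
theorem stmt9 {m n : ℕ} (hn : 1 ≤ n) (hmn : n < m) (S : Finset (Fin m × Fin n))
    (hspr : sprank S = n)
    (OPT : Finset (Fin m)) (hOPT : nu (patternOn S OPT) = n - 1)
    (hmax : ∀ T : Finset (Fin m), nu (patternOn S T) = n - 1 → T.card ≤ OPT.card)
    (M : Finset (Fin m × Fin n)) (hMsub : M ⊆ patternOn S OPT)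
    (hM : IsMatching M) (hMcard : M.card = n - 1)
    (I : Finset (Fin m)) (hI : I = M.image Prod.fst)
    (J : Finset (Fin m)) (hJ : J = OPT \ I) (hJne : J.Nonempty)
    (W : Finset (Fin n)) (hW : W = M.image Prod.snd)
    (v : Fin n) (hv : v ∉ W)
    :
    ∀ j ∈ J, ∀ k : Fin n, (j, k) ∈ S → ∃ i ∈ I ∩ rowsIn S W, (i, k) ∈ M := by
  intro j hj k hjk
  subst hI hJ hW
  have hjOPT : j ∈ OPT := (Finset.mem_sdiff.mp hj).1
  have hjI : j ∉ M.image Prod.fst := (Finset.mem_sdiff.mp hj).2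
  have hjrow : ∀ p ∈ M, p.1 ≠ j := by
    intro p hp h; exact hjI (Finset.mem_image.mpr ⟨p, hp, h⟩)
  have key : ∀ M' : Finset (Fin m × Fin n), M' ⊆ patternOn S OPT → IsMatching M' →
      M'.card ≠ n := by
    intro M' h1 h2 h3
    have := nu_ge_aux _ _ h1 h2
    rw [h3, hOPT] at this
    omega
  by_cases hkW : k ∈ M.image Prod.snd
  · obtain ⟨p, hpM0, hpk⟩ := Finset.mem_image.mp hkW
    obtain ⟨i, k₀⟩ := p
    have hpM : (i, k) ∈ M := by rw [show (i, k) = (i, k₀) from by rw [← hpk]]; exact hpM0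
    clear hpM0 hpk
    refine ⟨i, ?_, hpM⟩
    rw [Finset.mem_inter]
    refine ⟨Finset.mem_image.mpr ⟨(i, k), hpM, rfl⟩, ?_⟩
    rw [rowsIn, Finset.mem_filter]
    refine ⟨Finset.mem_univ _, ?_⟩
    intro k' hk'S
    by_contra hk'W
    have hiOPT : i ∈ OPT := (Finset.mem_filter.mp (hMsub hpM)).2
    have hij : i ≠ j := hjrow _ hpM
    have hkk' : k ≠ k' := fun h => hk'W (h ▸ hkW)
    have hrowi : ∀ q ∈ M, q ≠ (i, k) → q.1 ≠ i := by
      intro q hq hne h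
      exact (hM q hq (i, k) hpM hne).1 h
    have hcolk : ∀ q ∈ M, q ≠ (i, k) → q.2 ≠ k := by
      intro q hq hne h
      exact (hM q hq (i, k) hpM hne).2 h
    have hcolW : ∀ q ∈ M, q.2 ∈ M.image Prod.snd :=
      fun q hq => Finset.mem_image.mpr ⟨q, hq, rfl⟩
    have hik'E : (i, k') ∉ M.erase (i, k) := by
      intro h
      exact hk'W (hcolW _ (Finset.mem_of_mem_erase h))
    have hjkE : (j, k) ∉ insert (i, k') (M.erase (i, k)) := by
      intro h
      rcases Finset.mem_insert.mp h with h | h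
      · exact hij (congrArg Prod.fst h).symm
      · exact hjrow _ (Finset.mem_of_mem_erase h) rfl
    apply key (insert (j, k) (insert (i, k') (M.erase (i, k))))
    · intro q hq
      rcases Finset.mem_insert.mp hq with rfl | hq
      · exact Finset.mem_filter.mpr ⟨hjk, hjOPT⟩
      rcases Finset.mem_insert.mp hq with rfl | hq
      · exact Finset.mem_filter.mpr ⟨hk'S, hiOPT⟩
      · exact hMsub (Finset.mem_of_mem_erase hq)
    · intro p hp q hq hpq
      have hE : ∀ r ∈ M.erase (i, k), r.1 ≠ i ∧ r.1 ≠ j ∧ r.2 ≠ k ∧ r.2 ≠ k' := by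
        intro r hr
        have hrM := Finset.mem_of_mem_erase hr
        have hrne := Finset.ne_of_mem_erase hr
        exact ⟨hrowi r hrM hrne, hjrow r hrM, hcolk r hrM hrne,
          fun h => hk'W (h ▸ hcolW r hrM)⟩
      rcases Finset.mem_insert.mp hp with rfl | hp
      · rcases Finset.mem_insert.mp hq with rfl | hq
        · exact absurd rfl hpq
        rcases Finset.mem_insert.mp hq with rfl | hq
        · exact ⟨fun h => hij h.symm, hkk'⟩
        · exact ⟨fun h => (hE q hq).2.1 h.symm, fun h => (hE q hq).2.2.1 h.symm⟩
      rcases Finset.mem_insert.mp hp with rfl | hp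
      · rcases Finset.mem_insert.mp hq with rfl | hq
        · exact ⟨hij, fun h => hkk' h.symm⟩
        rcases Finset.mem_insert.mp hq with rfl | hq
        · exact absurd rfl hpq
        · exact ⟨fun h => (hE q hq).1 h.symm, fun h => (hE q hq).2.2.2 h.symm⟩
      · rcases Finset.mem_insert.mp hq with rfl | hq
        · exact ⟨(hE p hp).2.1, (hE p hp).2.2.1⟩
        rcases Finset.mem_insert.mp hq with rfl | hq
        · exact ⟨(hE p hp).1, (hE p hp).2.2.2⟩
        · exact hM p (Finset.mem_of_mem_erase hp) q (Finset.mem_of_mem_erase hq) hpq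
    · have h1 : 1 ≤ M.card := Finset.card_pos.mpr ⟨_, hpM⟩
      rw [Finset.card_insert_of_notMem hjkE, Finset.card_insert_of_notMem hik'E,
        Finset.card_erase_of_mem hpM, hMcard]
      omega
  · exfalso
    apply key (insert (j, k) M)
    · intro p hp
      rcases Finset.mem_insert.mp hp with rfl | hp
      · exact Finset.mem_filter.mpr ⟨hjk, hjOPT⟩
      · exact hMsub hp
    · intro p hp q hq hpq
      rcases Finset.mem_insert.mp hp with rfl | hp <;>
        rcases Finset.mem_insert.mp hq with rfl | hq
      · exact absurd rfl hpq
      · exact ⟨fun h => hjrow q hq h.symm, fun h => hkW (Finset.mem_image.mpr ⟨q, hq, h.symm⟩)⟩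
      · exact ⟨hjrow p hp, fun h => hkW (Finset.mem_image.mpr ⟨p, hp, h⟩)⟩
      · exact hM p hp q hq hpq
    · rw [Finset.card_insert_of_notMem (fun h => hjrow _ h rfl), hMcard]
      omega
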